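/- The least generalization (FIND-S update) of a rule r and a positive instance p, defined componentwise by keeping r_i if r_i = p_i and setting '?' otherwise, covers both p and every instance covered by r, and is the most specific such rule: any rule covering p and all instances covered by r is a componentwise generalization of it. -/
import Mathlib

def Covers {m : ℕ} {A : Fin m → Type*} (r : ∀ i, Option (A i)) (x : ∀ i, A i) : Prop :=
  ∀ i, r i = none ∨ r i = some (x i)

/-- The FIND-S least generalization of rule `r` and positive instance `p`:
keep `r i` if it equals `some (p i)`, otherwise set it to `?`. -/
def lgen {m : ℕ} {A : Fin m → Type*} [∀ i, DecidableEq (A i)]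
    (r : ∀ i, Option (A i)) (p : ∀ i, A i) : ∀ i, Option (A i) :=
  fun i => if r i = some (p i) then r i else none

/-- The least generalization `g(r,p)` covers `p` and every instance covered by `r`,
and it is the most specific such rule: assuming `r` covers some instance, any rule
`s` covering `p` and all instances covered by `r` covers every instance covered by
`g(r,p)`. -/
theorem least_generalization_spec (m : ℕ) (A : Fin m → Type*)
    [∀ i, DecidableEq (A i)] (r : ∀ i, Option (A i)) (p : ∀ i, A i)
    (hne : ∃ x, Covers r x) :
    Covers (lgen r p) p ∧
    (∀ x, Covers r x → Covers (lgen r p) x) ∧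
    (∀ s : ∀ i, Option (A i), Covers s p → (∀ x, Covers r x → Covers s x) →
      ∀ x, Covers (lgen r p) x → Covers s x) := by
  obtain ⟨y, hy⟩ := hne
  refine ⟨?_, ?_, ?_⟩
  · intro i
    by_cases h : r i = some (p i)
    · right; simp [lgen, h]
    · left; simp [lgen, h]
  · intro x hx i
    by_cases h : r i = some (p i)
    · rcases hx i with h2 | h2
      · simp [h] at h2
      · right; simp [lgen, h, h.symm.trans h2]
    · left; simp [lgen, h]
  · intro s hsp hsr x hx i
    rcases hx i with h | h
    · -- lgen r p i = none
      simp only [lgen] at h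
      by_cases hr : r i = some (p i)
      · simp [hr] at h
      · rcases Option.eq_none_or_eq_some (r i) with hri | ⟨a, hri⟩
        · -- r i = none : use update of y
          have hcov : Covers r (Function.update y i (x i)) := by
            intro j
            by_cases hji : j = i
            · subst hji; left; exact hri
            · rcases hy j with h1 | h1
              · left; exact h1
              · right; rw [Function.update_of_ne hji]; exact h1
          have := hsr _ hcov i
          rcases this with h1 | h1
          · left; exact h1
          · right; rw [h1, Function.update_self]
        · -- r i = some a, a ≠ p i
          have hyi : y i = a := by
            rcases hy i with h1 | h1
            · simp [hri] at h1
            · rw [hri] at h1; exact (Option.some_injective _ h1).symm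
          have hap : a ≠ p i := by
            intro he; exact hr (by rw [hri, he])
          rcases hsr y hy i with h1 | h1
          · left; exact h1
          · rcases hsp i with h2 | h2
            · left; exact h2
            · exfalso
              rw [h1, hyi] at h2
              exact hap (Option.some_injective _ h2)
    · -- lgen r p i = some (x i), so r i = some (p i) and x i = p i
      simp only [lgen] at h
      by_cases hr : r i = some (p i)
      · rw [if_pos hr, hr] at h
        have hxp : p i = x i := Option.some_injective _ h
        rcases hsp i with h1 | h1
        · left; exact h1
        · right; rw [h1, hxp]
      · simp [hr] at h
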